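/- Let G = (V,E) be a finite simple graph and let x ∈ [0,1]^E satisfy Σ_{e ∋ v} x_e ≤ 1 for every vertex v ∈ V. Then there exists a probability distribution μ on the matchings of G such that: (i) P_{S∼μ}[e ∈ S] = x_e/3 for every edge e ∈ E, and (ii) for every edge e ∈ E and every matching T with e ∉ T and P_{S∼μ}[S∖{e} = T] > 0, we have P_{S∼μ}[e ∈ S | S∖{e} = T] ≤ x_e. In particular, there is a (1/3)-selectable stationary online contention resolution scheme for the matching feasibility environment. -/

import Mathlib

open Finset

/-- `S` is a matching: the (endpoint sets of the) edges in `S` are pairwise disjoint. -/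
def IsMatching {V E : Type*} [DecidableEq V] (ends : E → Finset V) (S : Finset E) : Prop :=
  ∀ e ∈ S, ∀ f ∈ S, e ≠ f → Disjoint (ends e) (ends f)

noncomputable section StatOCRS
open scoped Classical
set_option linter.unusedSectionVars false
set_option maxHeartbeats 1000000

variable {V E : Type*} [Fintype V] [Fintype E] [DecidableEq V] [DecidableEq E]
variable (ends : E → Finset V) (x : E → ℝ)

/-- matchings inside the support `P` -/
def mset (ends : E → Finset V) (P : Finset E) : Finset (Finset E) :=
  univ.filter (fun S => IsMatching ends S ∧ S ⊆ P)

def Zf (ends : E → Finset V) (P : Finset E) (θ : E → ℝ) : ℝ :=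
  ∑ S ∈ mset ends P, Real.exp (∑ e ∈ S, θ e)

/-- numerator of the marginal of edge `e` -/
def Af (ends : E → Finset V) (P : Finset E) (θ : E → ℝ) (e : E) : ℝ :=
  ∑ S ∈ (mset ends P).filter (fun S => e ∈ S), Real.exp (∑ f ∈ S, θ f)

def Ze (ends : E → Finset V) (P : Finset E) (θ : E → ℝ) (e : E) : ℝ :=
  ∑ S ∈ (mset ends P).filter (fun S => ∀ f ∈ S, Disjoint (ends f) (ends e)),
    Real.exp (∑ f ∈ S, θ f)

def gf (ends : E → Finset V) (P : Finset E) (x : E → ℝ) (θ : E → ℝ) : ℝ :=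
  Real.log (Zf ends P θ) - ∑ e, (x e / 3) * θ e

variable (P : Finset E) (θ : E → ℝ)

lemma empty_mem_mset : ∅ ∈ mset ends P := by
  exact Finset.mem_filter.mpr ⟨Finset.mem_univ _, by simp [IsMatching], Finset.empty_subset _⟩

lemma Zf_ge (S : Finset E) (hS : S ∈ mset ends P) :
    Real.exp (∑ e ∈ S, θ e) ≤ Zf ends P θ :=
  single_le_sum (f := fun S => Real.exp (∑ e ∈ S, θ e)) (fun i _ => (Real.exp_pos _).le) hS

lemma one_le_Zf : (1 : ℝ) ≤ Zf ends P θ := by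
  simpa using Zf_ge ends P θ ∅ (empty_mem_mset ends P)

lemma Zf_pos : (0 : ℝ) < Zf ends P θ := lt_of_lt_of_le one_pos (one_le_Zf ends P θ)

lemma double_count (e : E) :
    ∑ f : E, x f * ((ends e ∩ ends f).card : ℝ)
      = ∑ v ∈ ends e, ∑ f ∈ univ.filter (fun f => v ∈ ends f), x f := by
  calc ∑ f : E, x f * ((ends e ∩ ends f).card : ℝ)
      = ∑ f : E, ∑ v ∈ ends e ∩ ends f, x f := by
        simp [Finset.sum_const, nsmul_eq_mul, mul_comm]
    _ = ∑ f : E, ∑ v ∈ ends e, if v ∈ ends f then x f else 0 := by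
        refine Finset.sum_congr rfl fun f _ => ?_
        rw [Finset.sum_ite_mem]
    _ = ∑ v ∈ ends e, ∑ f : E, if v ∈ ends f then x f else 0 := Finset.sum_comm
    _ = ∑ v ∈ ends e, ∑ f ∈ univ.filter (fun f => v ∈ ends f), x f := by
        simp [Finset.sum_filter]

lemma double_count_le (hends : ∀ f, (ends f).card ≤ 2)
    (hdeg : ∀ v : V, ∑ f ∈ univ.filter (fun f => v ∈ ends f), x f ≤ 1) (e : E) :
    ∑ f : E, x f * ((ends e ∩ ends f).card : ℝ) ≤ 2 := by
  rw [double_count]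
  calc ∑ v ∈ ends e, ∑ f ∈ univ.filter (fun f => v ∈ ends f), x f
      ≤ ∑ v ∈ ends e, (1:ℝ) := Finset.sum_le_sum fun v _ => hdeg v
    _ = (ends e).card := by simp
    _ ≤ 2 := by exact_mod_cast hends e

lemma touch_sum_le (hends : ∀ f, (ends f).card ≤ 2) (hx0 : ∀ f, 0 ≤ x f)
    (hdeg : ∀ v : V, ∑ f ∈ univ.filter (fun f => v ∈ ends f), x f ≤ 1) (e : E) :
    ∑ f ∈ univ.filter (fun f => ¬ Disjoint (ends f) (ends e)), x f ≤ 2 := by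
  refine le_trans ?_ (double_count_le ends x hends hdeg e)
  rw [← Finset.sum_filter_add_sum_filter_not univ (fun f => ¬ Disjoint (ends f) (ends e))
    (fun f => x f * ((ends e ∩ ends f).card : ℝ))]
  have h1 : ∑ f ∈ univ.filter (fun f => ¬ Disjoint (ends f) (ends e)), x f
      ≤ ∑ f ∈ univ.filter (fun f => ¬ Disjoint (ends f) (ends e)),
          x f * ((ends e ∩ ends f).card : ℝ) := by
    refine Finset.sum_le_sum fun f hf => ?_
    have hnd : ¬ Disjoint (ends f) (ends e) := (Finset.mem_filter.mp hf).2
    have hc : 1 ≤ ((ends e ∩ ends f).card : ℝ) := by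
      have : (ends e ∩ ends f).Nonempty := by
        rw [Finset.inter_comm]
        exact Finset.not_disjoint_iff_nonempty_inter.mp hnd
      exact_mod_cast Finset.card_pos.mpr this
    exact le_mul_of_one_le_right (hx0 f) hc
  have h2 : 0 ≤ ∑ f ∈ univ.filter (fun f => ¬¬ Disjoint (ends f) (ends e)),
      x f * ((ends e ∩ ends f).card : ℝ) :=
    Finset.sum_nonneg fun f _ => mul_nonneg (hx0 f) (by positivity)
  linarith

lemma touch_sum_le' (hends : ∀ f, (ends f).card ≤ 2) (hx0 : ∀ f, 0 ≤ x f)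
    (hdeg : ∀ v : V, ∑ f ∈ univ.filter (fun f => v ∈ ends f), x f ≤ 1) (e : E)
    (hcard : (ends e).card = 2) :
    ∑ f ∈ univ.filter (fun f => ¬ Disjoint (ends f) (ends e)), x f ≤ 2 - x e := by
  have hNe : e ∈ univ.filter (fun f => ¬ Disjoint (ends f) (ends e)) := by
    simp only [mem_filter, mem_univ, true_and]
    rw [Finset.disjoint_self_iff_empty]
    intro h; rw [h] at hcard; simp at hcard
  set Ne := univ.filter (fun f => ¬ Disjoint (ends f) (ends e)) with hNedef
  have key : x e + ∑ f ∈ Ne, x f ≤ ∑ f : E, x f * ((ends e ∩ ends f).card : ℝ) := by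
    have h1 : ∑ f ∈ Ne, x f * ((ends e ∩ ends f).card : ℝ)
        ≤ ∑ f : E, x f * ((ends e ∩ ends f).card : ℝ) := by
      refine Finset.sum_le_sum_of_subset_of_nonneg (subset_univ _) fun f _ _ => ?_
      exact mul_nonneg (hx0 f) (by positivity)
    have h4 : ∑ f ∈ Ne.erase e, x f + x e * 2
        ≤ ∑ f ∈ Ne, x f * ((ends e ∩ ends f).card : ℝ) := by
      rw [← Finset.sum_erase_add Ne (fun f => x f * ((ends e ∩ ends f).card : ℝ)) hNe]
      refine add_le_add (Finset.sum_le_sum fun f hf => ?_) ?_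
      · have hf' : f ∈ Ne := Finset.mem_of_mem_erase hf
        have hnd : ¬ Disjoint (ends f) (ends e) := by
          rw [hNedef] at hf'; simpa using hf'
        have hc : 1 ≤ ((ends e ∩ ends f).card : ℝ) := by
          have : (ends e ∩ ends f).Nonempty := by
            rw [Finset.inter_comm]
            exact Finset.not_disjoint_iff_nonempty_inter.mp hnd
          exact_mod_cast Finset.card_pos.mpr this
        exact le_mul_of_one_le_right (hx0 f) hc
      · rw [Finset.inter_self, hcard]; norm_num
    have h5 : ∑ f ∈ Ne.erase e, x f + x e = ∑ f ∈ Ne, x f := Finset.sum_erase_add _ _ hNe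
    linarith
  have := double_count_le ends x hends hdeg e
  linarith

lemma greedy (hcard : ∀ f, (ends f).card = 2) (hx0 : ∀ f, 0 ≤ x f)
    (hdeg : ∀ v : V, ∑ f ∈ univ.filter (fun f => v ∈ ends f), x f ≤ 1) (θ : E → ℝ)
    (F : Finset E) :
    ∃ S : Finset E, S ⊆ F ∧ IsMatching ends S ∧ (∀ f ∈ S, 0 < θ f) ∧
      ∑ e ∈ F, x e * max (θ e) 0 ≤ 2 * ∑ f ∈ S, θ f := by
  induction F using Finset.strongInduction with
  | _ F ih =>
    by_cases hF : (F.filter (fun f => 0 < θ f)).Nonempty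
    · obtain ⟨e, he, hemax⟩ := Finset.exists_max_image _ θ hF
      have heF : e ∈ F := (Finset.mem_filter.mp he).1
      have heθ : 0 < θ e := (Finset.mem_filter.mp he).2
      set R := F.filter (fun f => ¬ Disjoint (ends f) (ends e)) with hR
      have heR : e ∈ R := by
        refine Finset.mem_filter.mpr ⟨heF, ?_⟩
        rw [Finset.disjoint_self_iff_empty]
        intro h; have := hcard e; rw [h] at this; simp at this
      have hss : F \ R ⊂ F := by
        refine Finset.ssubset_iff_of_subset (Finset.sdiff_subset) |>.mpr ?_
        exact ⟨e, heF, by simp [heR]⟩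
      obtain ⟨S', hS'F, hS'm, hS'pos, hS'sum⟩ := ih _ hss
      have heS' : e ∉ S' := fun h => (Finset.mem_sdiff.mp (hS'F h)).2 heR
      have hdisj : ∀ f ∈ S', Disjoint (ends f) (ends e) := by
        intro f hf
        have := (Finset.mem_sdiff.mp (hS'F hf)).2
        by_contra hnd
        exact this (Finset.mem_filter.mpr ⟨(Finset.mem_sdiff.mp (hS'F hf)).1, hnd⟩)
      refine ⟨insert e S', ?_, ?_, ?_, ?_⟩
      · intro f hf
        rcases Finset.mem_insert.mp hf with rfl | hf
        · exact heF
        · exact (Finset.mem_sdiff.mp (hS'F hf)).1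
      · intro a ha b hb hab
        rcases Finset.mem_insert.mp ha with rfl | ha' <;>
          rcases Finset.mem_insert.mp hb with rfl | hb'
        · exact absurd rfl hab
        · exact (hdisj b hb').symm
        · exact hdisj a ha'
        · exact hS'm a ha' b hb' hab
      · intro f hf
        rcases Finset.mem_insert.mp hf with rfl | hf
        · exact heθ
        · exact hS'pos f hf
      · have hsplit : ∑ f ∈ F \ R, x f * max (θ f) 0 + ∑ f ∈ R, x f * max (θ f) 0
            = ∑ f ∈ F, x f * max (θ f) 0 :=
          Finset.sum_sdiff (Finset.filter_subset _ _)
        have hRle : ∑ f ∈ R, x f * max (θ f) 0 ≤ 2 * θ e := by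
          have h1 : ∑ f ∈ R, x f * max (θ f) 0 ≤ ∑ f ∈ R, x f * θ e := by
            refine Finset.sum_le_sum fun f hf => ?_
            have hfF : f ∈ F := (Finset.mem_filter.mp hf).1
            refine mul_le_mul_of_nonneg_left ?_ (hx0 f)
            rcases le_or_gt (θ f) 0 with h | h
            · rw [max_eq_right h]; exact heθ.le
            · rw [max_eq_left h.le]
              exact hemax f (Finset.mem_filter.mpr ⟨hfF, h⟩)
          have h2 : ∑ f ∈ R, x f ≤ 2 := by
            refine le_trans ?_ (touch_sum_le ends x (fun f => (hcard f).le) hx0 hdeg e)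
            refine Finset.sum_le_sum_of_subset_of_nonneg ?_ (fun f _ _ => hx0 f)
            intro f hf
            exact Finset.mem_filter.mpr ⟨Finset.mem_univ f, (Finset.mem_filter.mp hf).2⟩
          calc ∑ f ∈ R, x f * max (θ f) 0 ≤ ∑ f ∈ R, x f * θ e := h1
            _ = (∑ f ∈ R, x f) * θ e := by rw [Finset.sum_mul]
            _ ≤ 2 * θ e := by nlinarith
        rw [Finset.sum_insert heS', ← hsplit]
        linarith
    · refine ⟨∅, Finset.empty_subset _, by intro a ha; simp at ha, by simp, ?_⟩
      have : ∀ f ∈ F, x f * max (θ f) 0 = 0 := by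
        intro f hf
        rcases le_or_gt (θ f) 0 with h | h
        · rw [max_eq_right h, mul_zero]
        · exact absurd ⟨f, Finset.mem_filter.mpr ⟨hf, h⟩⟩ hF
      rw [Finset.sum_congr rfl this]
      simp
-- continuity of gf
lemma gf_continuous : Continuous (gf ends P x) := by
  have hZ : Continuous (Zf ends P) := by
    refine continuous_finset_sum _ fun S _ => ?_
    exact Real.continuous_exp.comp (continuous_finset_sum _ fun e _ => continuous_apply e)
  have hlog : Continuous fun θ => Real.log (Zf ends P θ) :=
    hZ.log fun θ => (Zf_pos ends P θ).ne'
  exact hlog.sub (continuous_finset_sum _ fun e _ => (continuous_const.mul (continuous_apply e)))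

lemma exists_min (hcard : ∀ f, (ends f).card = 2) (hx0 : ∀ f, 0 ≤ x f)
    (hdeg : ∀ v : V, ∑ f ∈ univ.filter (fun f => v ∈ ends f), x f ≤ 1)
    (hP : P = univ.filter (fun e => 0 < x e)) :
    ∃ θ : E → ℝ, (∀ e, e ∉ P → θ e = 0) ∧
      ∀ θ' : E → ℝ, (∀ e, e ∉ P → θ' e = 0) → gf ends P x θ ≤ gf ends P x θ' := by
  set K : Set (E → ℝ) := {θ | ∀ e, e ∉ P → θ e = 0} with hK
  set g := gf ends P x with hg
  set c := g 0 with hc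
  have hc0 : 0 ≤ c := by
    have : g 0 = Real.log (Zf ends P 0) := by simp [hg, gf]
    rw [hc, this]
    exact Real.log_nonneg (one_le_Zf ends P 0)
  -- a priori coordinate bounds on the sublevel set
  have hbound : ∀ θ ∈ K, g θ ≤ c → ∀ e,
      θ e ∈ Set.Icc (-(3*c + 9*c/(x e) + 1)) (3*c + 9*c/(x e) + 1) := by
    intro θ hθK hθc e
    obtain ⟨S, -, hSm, hSpos, hSsum⟩ := greedy ends x hcard hx0 hdeg θ univ
    have hSP : S ∈ mset ends P := by
      refine Finset.mem_filter.mpr ⟨Finset.mem_univ _, hSm, ?_⟩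
      intro f hf
      by_contra hfP
      exact absurd (hθK f hfP) (ne_of_gt (hSpos f hf))
    have hθS0 : 0 ≤ ∑ f ∈ S, θ f := Finset.sum_nonneg fun f hf => (hSpos f hf).le
    have hlogS : ∑ f ∈ S, θ f ≤ Real.log (Zf ends P θ) := by
      rw [← Real.log_exp (∑ f ∈ S, θ f)]
      exact Real.log_le_log (Real.exp_pos _) (Zf_ge ends P θ S hSP)
    have hL1 : ∑ e, (x e / 3) * θ e ≤ (2/3) * ∑ f ∈ S, θ f := by
      have : ∑ e, (x e / 3) * θ e ≤ ∑ e, (x e / 3) * max (θ e) 0 :=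
        Finset.sum_le_sum fun e _ => by
          have := hx0 e
          nlinarith [le_max_left (θ e) 0]
      have h2 : ∑ e, (x e / 3) * max (θ e) 0 = (1/3) * ∑ e, x e * max (θ e) 0 := by
        rw [Finset.mul_sum]; exact Finset.sum_congr rfl fun e _ => by ring
      rw [h2] at this
      linarith
    have hgθ : g θ = Real.log (Zf ends P θ) - ∑ e, (x e / 3) * θ e := rfl
    have hS3c : ∑ f ∈ S, θ f ≤ 3 * c := by nlinarith
    have hL2c : ∑ e, (x e / 3) * θ e ≤ 2 * c := by nlinarith
    -- upper bound on θ e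
    have hup : θ e ≤ 3 * c := by
      by_cases heP : e ∈ P
      · have hsing : ({e} : Finset E) ∈ mset ends P := by
          refine Finset.mem_filter.mpr ⟨Finset.mem_univ _, ?_, by simpa using heP⟩
          intro a ha b hb hab
          simp only [Finset.mem_singleton] at ha hb
          exact absurd (ha.trans hb.symm) hab
        have : θ e ≤ Real.log (Zf ends P θ) := by
          rw [← Real.log_exp (θ e)]
          refine Real.log_le_log (Real.exp_pos _) ?_
          simpa using Zf_ge ends P θ {e} hsing
        nlinarith
      · rw [hθK e heP]; linarith
    have hlow : -(9*c/(x e)) - 1 ≤ θ e := by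
      by_cases heP : e ∈ P
      · have hxe : 0 < x e := by
          rw [hP] at heP; exact (Finset.mem_filter.mp heP).2
        -- log Z ≥ 0 so  -∑ (x/3) θ ≤ g θ ≤ c
        have hlogZ0 : 0 ≤ Real.log (Zf ends P θ) := Real.log_nonneg (one_le_Zf ends P θ)
        have hLlow : -(3*c) ≤ ∑ e, (x e / 3) * θ e := by nlinarith
        -- ∑ x max(-θ,0) ≤ 9 c
        have hneg : ∑ f, x f * max (-(θ f)) 0 ≤ 9 * c := by
          have hid : ∀ f, x f * max (-(θ f)) 0
              = x f * max (θ f) 0 - 3 * ((x f / 3) * θ f) := by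
            intro f
            rcases le_or_gt (θ f) 0 with h | h
            · rw [max_eq_left (by linarith), max_eq_right h]; ring
            · rw [max_eq_right (by linarith), max_eq_left h.le]; ring
          rw [Finset.sum_congr rfl fun f _ => hid f, Finset.sum_sub_distrib]
          have h3 : ∑ f, 3 * ((x f / 3) * θ f) = 3 * ∑ f, (x f / 3) * θ f := by
            rw [Finset.mul_sum]
          rw [h3]
          nlinarith
        have hterm : x e * max (-(θ e)) 0 ≤ 9 * c := by
          refine le_trans ?_ hneg
          exact Finset.single_le_sum (f := fun f => x f * max (-(θ f)) 0)
            (fun f _ => mul_nonneg (hx0 f) (le_max_right _ _)) (Finset.mem_univ e)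
        have : max (-(θ e)) 0 ≤ 9 * c / x e := by
          rw [le_div_iff₀ hxe]
          nlinarith
        have h4 : -(θ e) ≤ 9 * c / x e := le_trans (le_max_left _ _) this
        linarith
      · rw [hθK e heP]
        have hd : 0 ≤ 9*c/(x e) := by
          rcases (hx0 e).lt_or_eq with h | h
          · positivity
          · rw [← h, div_zero]
        linarith
    constructor
    · have hd : 0 ≤ 9*c/x e := by
        rcases lt_or_eq_of_le (hx0 e) with h | h
        · positivity
        · rw [← h]; simp
      linarith
    · have hd : 0 ≤ 9*c/x e := by
        rcases lt_or_eq_of_le (hx0 e) with h | h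
        · positivity
        · rw [← h]; simp
      linarith
  -- the sublevel set is compact
  set C : Set (E → ℝ) := K ∩ {θ | g θ ≤ c} with hCdef
  have hKclosed : IsClosed K := by
    have : K = ⋂ (e : E), ⋂ (_ : e ∉ P), {θ : E → ℝ | θ e = 0} := by
      ext θ; simp [hK]
    rw [this]
    exact isClosed_iInter fun e => isClosed_iInter fun _ =>
      isClosed_eq (continuous_apply e) continuous_const
  have hCclosed : IsClosed C :=
    hKclosed.inter (isClosed_le (gf_continuous ends x P) continuous_const)
  have hCsub : C ⊆ Set.pi Set.univ fun e =>
      Set.Icc (-(3*c + 9*c/(x e) + 1)) (3*c + 9*c/(x e) + 1) := by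
    intro θ hθ e _
    exact hbound θ hθ.1 hθ.2 e
  have hCcomp : IsCompact C :=
    (isCompact_univ_pi fun e => isCompact_Icc).of_isClosed_subset hCclosed hCsub
  have hCne : C.Nonempty := ⟨0, ⟨fun e _ => rfl, hc.ge⟩⟩
  obtain ⟨θ₀, hθ₀C, hθ₀min⟩ := hCcomp.exists_isMinOn hCne (gf_continuous ends x P).continuousOn
  refine ⟨θ₀, hθ₀C.1, ?_⟩
  intro θ' hθ'K
  rcases le_or_gt (g θ') c with h | h
  · exact isMinOn_iff.mp hθ₀min θ' ⟨hθ'K, h⟩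
  · exact hθ₀C.2.trans h.le

lemma marginal_eq (θ : E → ℝ) (hθK : ∀ e, e ∉ P → θ e = 0)
    (hmin : ∀ θ' : E → ℝ, (∀ e, e ∉ P → θ' e = 0) → gf ends P x θ ≤ gf ends P x θ')
    (e : E) (heP : e ∈ P) :
    Af ends P θ e = (x e / 3) * Zf ends P θ := by
  set A := Af ends P θ e with hA
  set B := ∑ S ∈ (mset ends P).filter (fun S => e ∉ S), Real.exp (∑ f ∈ S, θ f) with hB
  have hAB : A + B = Zf ends P θ := by
    rw [hA, hB, Af, Zf]
    rw [← Finset.sum_filter_add_sum_filter_not (mset ends P) (fun S => e ∈ S)]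
  have hApos : 0 < A := by
    have hsing : ({e} : Finset E) ∈ (mset ends P).filter (fun S => e ∈ S) := by
      refine Finset.mem_filter.mpr ⟨?_, by simp⟩
      refine Finset.mem_filter.mpr ⟨Finset.mem_univ _, ?_, by simpa using heP⟩
      intro a ha b hb hab
      simp only [Finset.mem_singleton] at ha hb
      exact absurd (ha.trans hb.symm) hab
    calc (0:ℝ) < Real.exp (∑ f ∈ ({e} : Finset E), θ f) := Real.exp_pos _
      _ ≤ A := Finset.single_le_sum (f := fun S => Real.exp (∑ f ∈ S, θ f))
          (fun S _ => (Real.exp_pos _).le) hsing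
  have hBpos : 0 ≤ B := Finset.sum_nonneg fun S _ => (Real.exp_pos _).le
  have hZsplit : ∀ t : ℝ, Zf ends P (Function.update θ e (θ e + t)) = A * Real.exp t + B := by
    intro t
    rw [Zf, ← Finset.sum_filter_add_sum_filter_not (mset ends P) (fun S => e ∈ S)]
    congr 1
    · rw [hA, Af, Finset.sum_mul]
      refine Finset.sum_congr rfl fun S hS => ?_
      have heS : e ∈ S := (Finset.mem_filter.mp hS).2
      have hsum : ∑ f ∈ S, Function.update θ e (θ e + t) f = (∑ f ∈ S, θ f) + t := by
        rw [Finset.sum_update_of_mem heS]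
        have h2 : θ e + ∑ f ∈ S \ {e}, θ f = ∑ f ∈ S, θ f := by
          rw [Finset.sdiff_singleton_eq_erase]; exact Finset.add_sum_erase _ _ heS
        linarith
      rw [hsum, Real.exp_add]
    · refine Finset.sum_congr rfl fun S hS => ?_
      have heS : e ∉ S := (Finset.mem_filter.mp hS).2
      congr 1
      refine Finset.sum_congr rfl fun f hf => ?_
      have hfe : f ≠ e := by rintro rfl; exact heS hf
      exact Function.update_of_ne hfe _ _
  have hLsplit : ∀ t : ℝ, ∑ f, (x f / 3) * Function.update θ e (θ e + t) f
      = (∑ f, (x f / 3) * θ f) + (x e / 3) * t := by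
    intro t
    have : ∀ f : E, (x f / 3) * Function.update θ e (θ e + t) f
        = (x f / 3) * θ f + (if f = e then (x e / 3) * t else 0) := by
      intro f
      by_cases h : f = e
      · subst h; rw [Function.update_self, if_pos rfl]; ring
      · rw [Function.update_of_ne h, if_neg h]; ring
    rw [Finset.sum_congr rfl fun f _ => this f, Finset.sum_add_distrib]
    congr 1
    simp
  set ψ : ℝ → ℝ := fun t => Real.log (A * Real.exp t + B) - (x e / 3) * t with hψ
  have hψg : ∀ t, ψ t = gf ends P x (Function.update θ e (θ e + t)) + ∑ f, (x f / 3) * θ f := by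
    intro t
    rw [hψ, gf, hZsplit t, hLsplit t]; ring
  have hmin0 : ∀ t : ℝ, ψ 0 ≤ ψ t := by
    intro t
    rw [hψg 0, hψg t]
    have h0 : Function.update θ e (θ e + 0) = θ := by
      ext f; by_cases h : f = e
      · subst h; rw [Function.update_self]; ring
      · rw [Function.update_of_ne h]
    rw [h0]
    have hK' : ∀ f, f ∉ P → Function.update θ e (θ e + t) f = 0 := by
      intro f hf
      have hfe : f ≠ e := fun h => hf (h ▸ heP)
      rw [Function.update_of_ne hfe]; exact hθK f hf
    linarith [hmin _ hK']
  have hlocmin : IsLocalMin ψ 0 := Filter.Eventually.of_forall hmin0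
  have hpos0 : 0 < A * Real.exp 0 + B := by positivity
  have hderiv : HasDerivAt ψ (A * Real.exp 0 / (A * Real.exp 0 + B) - x e / 3) 0 := by
    have h1 : HasDerivAt (fun t => A * Real.exp t + B) (A * Real.exp 0) 0 :=
      ((Real.hasDerivAt_exp 0).const_mul A).add_const B
    have h2 : HasDerivAt (fun t => Real.log (A * Real.exp t + B))
        (A * Real.exp 0 / (A * Real.exp 0 + B)) 0 := h1.log hpos0.ne'
    have h3 : HasDerivAt (fun t : ℝ => (x e / 3) * t) (x e / 3) 0 := by
      simpa using (hasDerivAt_id (0:ℝ)).const_mul (x e / 3)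
    exact h2.sub h3
  have hzero := hlocmin.hasDerivAt_eq_zero hderiv
  rw [Real.exp_zero, mul_one] at hzero
  have : A / (A + B) = x e / 3 := by linarith
  rw [← hAB]
  field_simp at this ⊢
  linarith

-- Af vanishes outside P
lemma Af_zero (e : E) (heP : e ∉ P) : Af ends P θ e = 0 := by
  rw [Af]
  refine Finset.sum_eq_zero fun S hS => ?_
  obtain ⟨hS1, hS2⟩ := Finset.mem_filter.mp hS
  obtain ⟨-, -, hSP⟩ := Finset.mem_filter.mp hS1
  exact absurd (hSP hS2) heP

lemma Af_eq_exp_mul_Ze (hcard : ∀ f, (ends f).card = 2) (e : E) (heP : e ∈ P) :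
    Af ends P θ e = Real.exp (θ e) * Ze ends P θ e := by
  rw [Af, Ze, Finset.mul_sum]
  refine Finset.sum_nbij' (fun S => S.erase e) (fun S => insert e S) ?_ ?_ ?_ ?_ ?_
  · intro S hS
    obtain ⟨hS1, heS⟩ := Finset.mem_filter.mp hS
    obtain ⟨-, hSm, hSP⟩ := Finset.mem_filter.mp hS1
    refine Finset.mem_filter.mpr ⟨Finset.mem_filter.mpr ⟨Finset.mem_univ _, ?_, ?_⟩, ?_⟩
    · intro a ha b hb hab
      exact hSm a (Finset.mem_of_mem_erase ha) b (Finset.mem_of_mem_erase hb) hab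
    · exact (Finset.erase_subset _ _).trans hSP
    · intro f hf
      exact hSm f (Finset.mem_of_mem_erase hf) e heS (Finset.ne_of_mem_erase hf)
  · intro S hS
    obtain ⟨hS1, hdisj⟩ := Finset.mem_filter.mp hS
    obtain ⟨-, hSm, hSP⟩ := Finset.mem_filter.mp hS1
    refine Finset.mem_filter.mpr ⟨Finset.mem_filter.mpr ⟨Finset.mem_univ _, ?_, ?_⟩, ?_⟩
    · intro a ha b hb hab
      rcases Finset.mem_insert.mp ha with rfl | ha' <;>
        rcases Finset.mem_insert.mp hb with rfl | hb'
      · exact absurd rfl hab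
      · exact (hdisj b hb').symm
      · exact hdisj a ha'
      · exact hSm a ha' b hb' hab
    · exact Finset.insert_subset heP hSP
    · exact Finset.mem_insert_self e S
  · intro S hS
    exact Finset.insert_erase (Finset.mem_filter.mp hS).2
  · intro S hS
    obtain ⟨-, hdisj⟩ := Finset.mem_filter.mp hS
    have heS : e ∉ S := by
      intro h
      have := hdisj e h
      rw [Finset.disjoint_self_iff_empty] at this
      have h2 := hcard e; rw [this] at h2; simp at h2
    exact Finset.erase_insert heS
  · intro S hS
    have heS : e ∈ S := (Finset.mem_filter.mp hS).2
    rw [← Real.exp_add]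
    congr 1
    rw [← Finset.add_sum_erase _ _ heS]
  
lemma Ze_ge (hcard : ∀ f, (ends f).card = 2) (hx0 : ∀ f, 0 ≤ x f) (hx1 : ∀ f, x f ≤ 1)
    (hdeg : ∀ v : V, ∑ f ∈ univ.filter (fun f => v ∈ ends f), x f ≤ 1)
    (hP : P = univ.filter (fun e => 0 < x e))
    (θ : E → ℝ) (hθK : ∀ e, e ∉ P → θ e = 0)
    (hmin : ∀ θ' : E → ℝ, (∀ e, e ∉ P → θ' e = 0) → gf ends P x θ ≤ gf ends P x θ')
    (e : E) :
    Zf ends P θ / 3 ≤ Ze ends P θ e := by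
  have hmarg : ∀ f : E, Af ends P θ f = (x f / 3) * Zf ends P θ := by
    intro f
    by_cases hfP : f ∈ P
    · exact marginal_eq ends x P θ hθK hmin f hfP
    · rw [Af_zero ends P θ f hfP]
      have : x f = 0 := by
        by_contra h
        exact hfP (hP ▸ Finset.mem_filter.mpr ⟨Finset.mem_univ _, (hx0 f).lt_of_ne (Ne.symm h)⟩)
      rw [this]; ring
  set Z := Zf ends P θ with hZdef
  have hZpos := Zf_pos ends P θ
  set Nbr := univ.filter (fun f => ¬ Disjoint (ends f) (ends e)) with hNbr
  have hbad : Z - Ze ends P θ e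
      = ∑ S ∈ (mset ends P).filter (fun S => ¬ ∀ f ∈ S, Disjoint (ends f) (ends e)),
          Real.exp (∑ f ∈ S, θ f) := by
    rw [hZdef, Zf, Ze, ← Finset.sum_filter_add_sum_filter_not (mset ends P)
      (fun S => ∀ f ∈ S, Disjoint (ends f) (ends e))]
    ring
  have hub : ∑ S ∈ (mset ends P).filter (fun S => ¬ ∀ f ∈ S, Disjoint (ends f) (ends e)),
      Real.exp (∑ f ∈ S, θ f) ≤ ∑ f ∈ Nbr, Af ends P θ f := by
    have hswap : ∑ f ∈ Nbr, Af ends P θ f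
        = ∑ S ∈ mset ends P, ∑ f ∈ Nbr, (if f ∈ S then Real.exp (∑ g ∈ S, θ g) else 0) := by
      rw [Finset.sum_comm]
      refine Finset.sum_congr rfl fun f _ => ?_
      rw [Af, Finset.sum_filter]
    rw [hswap]
    have hmono : ∑ S ∈ (mset ends P).filter (fun S => ¬ ∀ f ∈ S, Disjoint (ends f) (ends e)),
        ∑ f ∈ Nbr, (if f ∈ S then Real.exp (∑ g ∈ S, θ g) else 0)
        ≤ ∑ S ∈ mset ends P, ∑ f ∈ Nbr, (if f ∈ S then Real.exp (∑ g ∈ S, θ g) else 0) := by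
      refine Finset.sum_le_sum_of_subset_of_nonneg (Finset.filter_subset _ _) fun S _ _ => ?_
      refine Finset.sum_nonneg fun f _ => ?_
      split <;> [exact (Real.exp_pos _).le; exact le_refl 0]
    refine le_trans ?_ hmono
    refine Finset.sum_le_sum fun S hS => ?_
    obtain ⟨-, hSbad⟩ := Finset.mem_filter.mp hS
    push_neg at hSbad
    obtain ⟨f0, hf0S, hf0nd⟩ := hSbad
    have hf0Nbr : f0 ∈ Nbr := by
      rw [hNbr]; exact Finset.mem_filter.mpr ⟨Finset.mem_univ _, hf0nd⟩
    have := Finset.single_le_sum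
      (f := fun f => if f ∈ S then Real.exp (∑ g ∈ S, θ g) else 0)
      (fun f _ => by split <;> [exact (Real.exp_pos _).le; exact le_refl 0]) hf0Nbr
    simpa [hf0S] using this
  have hsum : ∑ f ∈ Nbr, Af ends P θ f = (Z / 3) * ∑ f ∈ Nbr, x f := by
    rw [Finset.mul_sum]
    refine Finset.sum_congr rfl fun f _ => ?_
    rw [hmarg f]; ring
  have hx2 : ∑ f ∈ Nbr, x f ≤ 2 - x e :=
    touch_sum_le' ends x (fun f => (hcard f).le) hx0 hdeg e (hcard e)
  have : Z - Ze ends P θ e ≤ (Z / 3) * (2 - x e) := by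
    rw [hbad]
    refine le_trans hub ?_
    rw [hsum]
    have : 0 ≤ Z / 3 := by positivity
    nlinarith
  nlinarith [hx0 e, hx1 e, hZpos]


end StatOCRS

theorem stmt_1
    {V E : Type*} [Fintype V] [Fintype E] [DecidableEq V] [DecidableEq E]
    -- a finite simple graph, with edge set `E` and endpoint map `ends`
    (ends : E → Finset V)
    (hsimple₁ : ∀ e, (ends e).card = 2)
    (hsimple₂ : Function.Injective ends)
    (x : E → ℝ) (hx : ∀ e, 0 ≤ x e ∧ x e ≤ 1)
    (hdeg : ∀ v : V, ∑ e ∈ univ.filter (fun e => v ∈ ends e), x e ≤ 1) :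
    ∃ μ : Finset E → ℝ,
      (∀ S, 0 ≤ μ S) ∧
      (∑ S : Finset E, μ S) = 1 ∧
      (∀ S, μ S ≠ 0 → IsMatching ends S) ∧
      -- (i) selectability with factor 1/3
      (∀ e, ∑ S ∈ univ.filter (fun S => e ∈ S), μ S = x e / 3) ∧
      -- (ii) stationary implementability
      (∀ e : E, ∀ T : Finset E, IsMatching ends T → e ∉ T →
        0 < μ T + μ (insert e T) →
        μ (insert e T) / (μ T + μ (insert e T)) ≤ x e) := by
  classical
  have hx0 : ∀ f, 0 ≤ x f := fun f => (hx f).1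
  have hx1 : ∀ f, x f ≤ 1 := fun f => (hx f).2
  set P : Finset E := univ.filter (fun e => 0 < x e) with hP
  obtain ⟨θ, hθK, hθmin⟩ := exists_min ends x P hsimple₁ hx0 hdeg hP
  set Z := Zf ends P θ with hZdef
  have hZpos : 0 < Z := Zf_pos ends P θ
  have hmarg : ∀ f : E, Af ends P θ f = (x f / 3) * Z := by
    intro f
    by_cases hfP : f ∈ P
    · exact marginal_eq ends x P θ hθK hθmin f hfP
    · rw [Af_zero ends P θ f hfP]
      have : x f = 0 := by
        by_contra h
        exact hfP (Finset.mem_filter.mpr ⟨Finset.mem_univ _, (hx0 f).lt_of_ne (Ne.symm h)⟩)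
      rw [this]; ring
  have hlam : ∀ e ∈ P, Real.exp (θ e) ≤ x e := by
    intro e heP
    have h1 := Af_eq_exp_mul_Ze ends P θ hsimple₁ e heP
    have h2 := Ze_ge ends x P hsimple₁ hx0 hx1 hdeg hP θ hθK hθmin e
    have h3 : 0 < Ze ends P θ e := lt_of_lt_of_le (by positivity) h2
    rw [hmarg e] at h1
    -- exp θe * Ze = (x e/3) Z ≤ x e * Ze
    have h4 : Real.exp (θ e) * Ze ends P θ e ≤ x e * Ze ends P θ e := by
      rw [← h1]
      have : (x e / 3) * Z ≤ x e * Ze ends P θ e := by nlinarith [hx0 e]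
      linarith
    exact le_of_mul_le_mul_right h4 h3
  refine ⟨fun S => (if S ∈ mset ends P then Real.exp (∑ f ∈ S, θ f) else 0) / Z,
    ?_, ?_, ?_, ?_, ?_⟩
  · intro S
    refine div_nonneg ?_ hZpos.le
    split <;> [exact (Real.exp_pos _).le; exact le_refl 0]
  · rw [← Finset.sum_div]
    rw [Finset.sum_ite_mem, Finset.univ_inter]
    rw [← Zf, ← hZdef, div_self hZpos.ne']
  · intro S hS
    by_cases h : S ∈ mset ends P
    · exact ((Finset.mem_filter.mp h).2).1
    · exact absurd (by simp [h]) hS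
  · intro e
    rw [← Finset.sum_div]
    have : ∑ S ∈ univ.filter (fun S => e ∈ S),
        (if S ∈ mset ends P then Real.exp (∑ f ∈ S, θ f) else 0) = Af ends P θ e := by
      rw [Finset.sum_ite_mem, Af]
      congr 1
      ext S
      simp only [Finset.mem_inter, Finset.mem_filter, Finset.mem_univ, true_and]
      tauto
    rw [this, hmarg e]
    field_simp
  · intro e T hTm heT hpos
    dsimp only at hpos ⊢
    by_cases hins : insert e T ∈ mset ends P
    · obtain ⟨-, -, hinsP⟩ := Finset.mem_filter.mp hins
      have heP : e ∈ P := hinsP (Finset.mem_insert_self e T)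
      have hTP : T ⊆ P := (Finset.subset_insert e T).trans hinsP
      have hTmem : T ∈ mset ends P :=
        Finset.mem_filter.mpr ⟨Finset.mem_univ _, hTm, hTP⟩
      have hwins : (if insert e T ∈ mset ends P then Real.exp (∑ f ∈ insert e T, θ f) else 0)
          = Real.exp (θ e) * Real.exp (∑ f ∈ T, θ f) := by
        rw [if_pos hins, Finset.sum_insert heT, Real.exp_add]
      have hwT : (if T ∈ mset ends P then Real.exp (∑ f ∈ T, θ f) else 0)
          = Real.exp (∑ f ∈ T, θ f) := if_pos hTmem
      rw [hwins, hwT]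
      set a := Real.exp (∑ f ∈ T, θ f) / Z with ha
      have hapos : 0 < a := by positivity
      have hlame := hlam e heP
      have hlampos : 0 < Real.exp (θ e) := Real.exp_pos _
      rw [mul_div_assoc]
      rw [← ha]
      rw [div_le_iff₀ (by nlinarith)]
      nlinarith [mul_nonneg (hx0 e) (mul_nonneg hlampos.le hapos.le),
        mul_le_mul_of_nonneg_right hlame hapos.le]
    · rw [if_neg hins, zero_div]
      have h0 : (0:ℝ) ≤ x e := hx0 e
      simpa using h0
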